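/- Let A, L ∈ ℝ^{k×k} and let a ∈ ℝ^k be the vector of columnwise maxima of A, a_j = max_i A_{ij}. Then max over Q in the simplex of nonnegative k×k matrices with entries summing to 1 of [ ⟨Q, A⟩ + min_{p ∈ Δ(Fin k)} pᵀ L (Qᵀ𝟙) ] equals max over r ∈ Δ(Fin k) of [ aᵀr + min_{p ∈ Δ(Fin k)} pᵀ L r ]. That is, the per-node inner optimization over the joint edge matrix Q reduces to an optimization over the node marginal r = Qᵀ𝟙 with the class-based potential vector a. -/

import Mathlib

open Finset

section Helpers

private lemma bsup_neg {P : Prop} (hP : ¬P) (f : P → ℝ) : (⨆ h : P, f h) = 0 := by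
  haveI : IsEmpty P := ⟨hP⟩
  exact Real.iSup_of_isEmpty f

private lemma binf_neg {P : Prop} (hP : ¬P) (f : P → ℝ) : (⨅ h : P, f h) = 0 := by
  haveI : IsEmpty P := ⟨hP⟩
  exact Real.iInf_of_isEmpty f

private lemma bsup_le {α : Sort*} [Nonempty α] {P : α → Prop} {f : α → ℝ} {B : ℝ}
    (hB : 0 ≤ B) (h : ∀ x, P x → f x ≤ B) : (⨆ x, ⨆ (_ : P x), f x) ≤ B := by
  apply ciSup_le
  intro x
  show (⨆ (_ : P x), f x) ≤ B
  by_cases hx : P x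
  · rw [ciSup_pos hx]; exact h x hx
  · rw [bsup_neg hx]; exact hB

private lemma bsup_bdd {α : Type*} {P : α → Prop} {f : α → ℝ} {B : ℝ}
    (hB : 0 ≤ B) (h : ∀ x, P x → f x ≤ B) :
    BddAbove (Set.range fun x => ⨆ (_ : P x), f x) := by
  refine ⟨B, ?_⟩
  rintro _ ⟨x, rfl⟩
  show (⨆ (_ : P x), f x) ≤ B
  by_cases hx : P x
  · rw [ciSup_pos hx]; exact h x hx
  · rw [bsup_neg hx]; exact hB

private lemma le_bsup {α : Type*} {P : α → Prop} {f : α → ℝ} {B : ℝ}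
    (hB : 0 ≤ B) (h : ∀ x, P x → f x ≤ B) {x0 : α} (hx0 : P x0) :
    f x0 ≤ ⨆ x, ⨆ (_ : P x), f x :=
  le_ciSup_of_le (bsup_bdd hB h) x0
    (le_of_eq (ciSup_pos (f := fun _ : P x0 => f x0) hx0).symm)

private lemma zero_le_bsup {α : Type*} {P : α → Prop} {f : α → ℝ} {B : ℝ}
    (hB : 0 ≤ B) (h : ∀ x, P x → f x ≤ B) {x0 : α} (hx0 : ¬ P x0) :
    0 ≤ ⨆ x, ⨆ (_ : P x), f x :=
  le_ciSup_of_le (bsup_bdd hB h) x0 (le_of_eq (bsup_neg hx0 _).symm)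

private lemma binf_bdd {α : Type*} {P : α → Prop} {f : α → ℝ} {B : ℝ}
    (hB : B ≤ 0) (h : ∀ x, P x → B ≤ f x) :
    BddBelow (Set.range fun x => ⨅ (_ : P x), f x) := by
  refine ⟨B, ?_⟩
  rintro _ ⟨x, rfl⟩
  show B ≤ ⨅ (_ : P x), f x
  by_cases hx : P x
  · rw [ciInf_pos hx]; exact h x hx
  · rw [binf_neg hx]; exact hB

private lemma binf_le {α : Type*} {P : α → Prop} {f : α → ℝ} {B : ℝ}
    (hB : B ≤ 0) (h : ∀ x, P x → B ≤ f x) {x0 : α} (hx0 : P x0) :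
    (⨅ x, ⨅ (_ : P x), f x) ≤ f x0 :=
  ciInf_le_of_le (binf_bdd hB h) x0
    (le_of_eq (ciInf_pos (f := fun _ : P x0 => f x0) hx0))

end Helpers

/-- The per-node inner optimization over the joint edge matrix `Q` reduces to an
optimization over the node marginal `r = Qᵀ𝟙` with the class-based potential vector
`a` of columnwise maxima of `A`:
`max_{Q ∈ Δ} [⟨Q,A⟩ + min_{p∈Δ(Fin k)} pᵀ L (Qᵀ𝟙)]
  = max_{r ∈ Δ(Fin k)} [aᵀr + min_{p∈Δ(Fin k)} pᵀ L r]`. -/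
theorem inner_optimization_marginal_reduction {k : ℕ}
    (A L : Matrix (Fin k) (Fin k) ℝ) :
    (⨆ (Q : Matrix (Fin k) (Fin k) ℝ)
        (_ : (∀ i j, 0 ≤ Q i j) ∧ ∑ i, ∑ j, Q i j = 1),
        (∑ i, ∑ j, Q i j * A i j)
          + ⨅ (p : Fin k → ℝ) (_ : p ∈ stdSimplex ℝ (Fin k)),
              ∑ a, ∑ b, p a * L a b * (∑ i, Q i b))
      = ⨆ (r : Fin k → ℝ) (_ : r ∈ stdSimplex ℝ (Fin k)),
          (∑ j, (⨆ i, A i j) * r j)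
            + ⨅ (p : Fin k → ℝ) (_ : p ∈ stdSimplex ℝ (Fin k)),
                ∑ a, ∑ b, p a * L a b * r b := by
  rcases Nat.eq_zero_or_pos k with hk | hk
  · subst hk
    have h1 : ∀ Q : Matrix (Fin 0) (Fin 0) ℝ,
        ¬((∀ i j, 0 ≤ Q i j) ∧ ∑ i, ∑ j, Q i j = 1) := by
      intro Q h; simpa using h.2
    have h2 : ∀ r : Fin 0 → ℝ, r ∉ stdSimplex ℝ (Fin 0) := by
      intro r h; simpa using h.2
    rw [iSup_congr fun Q => bsup_neg (h1 Q) _, iSup_congr fun r => bsup_neg (h2 r) _,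
      ciSup_const, ciSup_const]
  haveI : Nonempty (Fin k) := ⟨⟨0, hk⟩⟩
  have hmem : ∀ p : Fin k → ℝ, p ∈ stdSimplex ℝ (Fin k) ↔
      (∀ i, 0 ≤ p i) ∧ ∑ i, p i = 1 := fun p => Iff.rfl
  set BL := ∑ a, ∑ b, |L a b| with hBLdef
  set BA := ∑ j, ∑ i, |A i j| with hBAdef
  have hBL0 : 0 ≤ BL := sum_nonneg fun _ _ => sum_nonneg fun _ _ => abs_nonneg _
  have hBA0 : 0 ≤ BA := sum_nonneg fun _ _ => sum_nonneg fun _ _ => abs_nonneg _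
  have hle1 : ∀ p : Fin k → ℝ, p ∈ stdSimplex ℝ (Fin k) → ∀ a, p a ≤ 1 := by
    intro p hp a
    rcases (hmem p).1 hp with ⟨h0, h1⟩
    calc p a ≤ ∑ i, p i := single_le_sum (fun i _ => h0 i) (mem_univ a)
      _ = 1 := h1
  -- bound on the bilinear form
  have hg : ∀ r : Fin k → ℝ, (∀ j, 0 ≤ r j) → (∀ j, r j ≤ 1) →
      ∀ p ∈ stdSimplex ℝ (Fin k), |∑ a, ∑ b, p a * L a b * r b| ≤ BL := by
    intro r hr0 hr1 p hp
    calc |∑ a, ∑ b, p a * L a b * r b| ≤ ∑ a, |∑ b, p a * L a b * r b| :=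
          Finset.abs_sum_le_sum_abs _ _
      _ ≤ ∑ a, ∑ b, |p a * L a b * r b| :=
          sum_le_sum fun a _ => Finset.abs_sum_le_sum_abs _ _
      _ ≤ BL := by
          refine sum_le_sum fun a _ => sum_le_sum fun b _ => ?_
          rw [abs_mul, abs_mul]
          have h1 : |p a| ≤ 1 := abs_le.2 ⟨by linarith [((hmem p).1 hp).1 a], hle1 p hp a⟩
          have h2 : |r b| ≤ 1 := abs_le.2 ⟨by linarith [hr0 b], hr1 b⟩
          calc |p a| * |L a b| * |r b| ≤ |p a| * |L a b| :=
                mul_le_of_le_one_right (by positivity) h2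
            _ ≤ 1 * |L a b| := mul_le_mul_of_nonneg_right h1 (abs_nonneg _)
            _ = |L a b| := one_mul _
  have hglb : ∀ r : Fin k → ℝ, (∀ j, 0 ≤ r j) → (∀ j, r j ≤ 1) →
      ∀ p ∈ stdSimplex ℝ (Fin k), -BL ≤ ∑ a, ∑ b, p a * L a b * r b := by
    intro r hr0 hr1 p hp
    exact neg_le_of_abs_le (hg r hr0 hr1 p hp)
  -- uniform distribution is in the simplex
  have hp0 : (fun _ : Fin k => (k : ℝ)⁻¹) ∈ stdSimplex ℝ (Fin k) := by
    refine (hmem _).2 ⟨fun i => by positivity, ?_⟩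
    rw [Finset.sum_const, card_univ, Fintype.card_fin, nsmul_eq_mul]
    field_simp
  have hinf_le : ∀ r : Fin k → ℝ, (∀ j, 0 ≤ r j) → (∀ j, r j ≤ 1) →
      (⨅ (p : Fin k → ℝ) (_ : p ∈ stdSimplex ℝ (Fin k)),
        ∑ a, ∑ b, p a * L a b * r b) ≤ BL := by
    intro r hr0 hr1
    refine le_trans (binf_le (neg_nonpos.2 hBL0) (hglb r hr0 hr1) hp0) ?_
    exact le_of_abs_le (hg r hr0 hr1 _ hp0)
  -- bound for the RHS objective on the simplex
  have hsup_le : ∀ j, (⨆ i, A i j) ≤ ∑ i, |A i j| := fun j =>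
    ciSup_le fun i => le_trans (le_abs_self _)
      (single_le_sum (fun i _ => abs_nonneg (A i j)) (mem_univ i))
  have hGbound : ∀ r : Fin k → ℝ, r ∈ stdSimplex ℝ (Fin k) →
      (∑ j, (⨆ i, A i j) * r j)
        + (⨅ (p : Fin k → ℝ) (_ : p ∈ stdSimplex ℝ (Fin k)),
            ∑ a, ∑ b, p a * L a b * r b) ≤ BA + BL := by
    intro r hr
    rcases (hmem r).1 hr with ⟨hr0, _⟩
    have hr1 : ∀ j, r j ≤ 1 := hle1 r hr
    have h1 : (∑ j, (⨆ i, A i j) * r j) ≤ BA := by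
      calc (∑ j, (⨆ i, A i j) * r j) ≤ ∑ j, (∑ i, |A i j|) * r j :=
            sum_le_sum fun j _ => mul_le_mul_of_nonneg_right (hsup_le j) (hr0 j)
        _ ≤ ∑ j, ∑ i, |A i j| := sum_le_sum fun j _ => mul_le_of_le_one_right
            (sum_nonneg fun i _ => abs_nonneg _) (hr1 j)
        _ = BA := hBAdef.symm
    linarith [hinf_le r hr0 hr1]
  -- bound for the LHS objective on feasible Q
  have hFbound : ∀ Q : Matrix (Fin k) (Fin k) ℝ,
      ((∀ i j, 0 ≤ Q i j) ∧ ∑ i, ∑ j, Q i j = 1) →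
      (∑ i, ∑ j, Q i j * A i j)
        + (⨅ (p : Fin k → ℝ) (_ : p ∈ stdSimplex ℝ (Fin k)),
            ∑ a, ∑ b, p a * L a b * (∑ i, Q i b)) ≤ BA + BL := by
    intro Q hQ
    have hcol0 : ∀ j, 0 ≤ ∑ i, Q i j := fun j => sum_nonneg fun i _ => hQ.1 i j
    have hcolsum : ∑ j, ∑ i, Q i j = 1 := by rw [Finset.sum_comm]; exact hQ.2
    have hcol1 : ∀ j, (∑ i, Q i j) ≤ 1 := by
      intro j
      calc (∑ i, Q i j) ≤ ∑ j, ∑ i, Q i j :=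
            single_le_sum (fun j _ => hcol0 j) (mem_univ j)
        _ = 1 := hcolsum
    have hQ1 : ∀ i j, Q i j ≤ 1 := by
      intro i j
      calc Q i j ≤ ∑ i, Q i j := single_le_sum (fun i _ => hQ.1 i j) (mem_univ i)
        _ ≤ 1 := hcol1 j
    have h1 : (∑ i, ∑ j, Q i j * A i j) ≤ BA := by
      calc (∑ i, ∑ j, Q i j * A i j) ≤ ∑ i, ∑ j, |A i j| := ?_
        _ = BA := by rw [hBAdef]; exact Finset.sum_comm
      refine sum_le_sum fun i _ => sum_le_sum fun j _ => ?_
      calc Q i j * A i j ≤ |Q i j * A i j| := le_abs_self _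
        _ = |Q i j| * |A i j| := abs_mul _ _
        _ ≤ 1 * |A i j| := mul_le_mul_of_nonneg_right
            (abs_le.2 ⟨by linarith [hQ.1 i j], hQ1 i j⟩) (abs_nonneg _)
        _ = |A i j| := one_mul _
    linarith [hinf_le (fun j => ∑ i, Q i j) hcol0 hcol1]
  -- now prove the equality
  apply le_antisymm
  · apply ciSup_le
    intro Q
    by_cases hQ : ((∀ i j, 0 ≤ Q i j) ∧ ∑ i, ∑ j, Q i j = 1)
    · rw [ciSup_pos hQ]
      have hcol0 : ∀ j, 0 ≤ ∑ i, Q i j := fun j => sum_nonneg fun i _ => hQ.1 i j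
      have hcolsum : ∑ j, ∑ i, Q i j = 1 := by rw [Finset.sum_comm]; exact hQ.2
      have hrS : (fun j => ∑ i, Q i j) ∈ stdSimplex ℝ (Fin k) :=
        (hmem _).2 ⟨hcol0, hcolsum⟩
      have step : (∑ i, ∑ j, Q i j * A i j) ≤ ∑ j, (⨆ i, A i j) * (∑ i, Q i j) := by
        rw [Finset.sum_comm]
        refine sum_le_sum fun j _ => ?_
        rw [Finset.mul_sum]
        refine sum_le_sum fun i _ => ?_
        rw [mul_comm]
        exact mul_le_mul_of_nonneg_right
          (le_ciSup (f := fun i => A i j)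
            (Set.Finite.bddAbove (Set.finite_range _)) i) (hQ.1 i j)
      calc (∑ i, ∑ j, Q i j * A i j)
            + (⨅ (p : Fin k → ℝ) (_ : p ∈ stdSimplex ℝ (Fin k)),
                ∑ a, ∑ b, p a * L a b * (∑ i, Q i b))
          ≤ (∑ j, (⨆ i, A i j) * (∑ i, Q i j))
            + (⨅ (p : Fin k → ℝ) (_ : p ∈ stdSimplex ℝ (Fin k)),
                ∑ a, ∑ b, p a * L a b * (∑ i, Q i b)) := by linarith [step]
        _ ≤ _ := le_bsup (by linarith) hGbound hrS
    · rw [bsup_neg hQ]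
      have h0 : (fun _ : Fin k => (0:ℝ)) ∉ stdSimplex ℝ (Fin k) := by
        intro h
        have := ((hmem _).1 h).2
        simp at this
      exact zero_le_bsup (by linarith) hGbound h0
  · apply ciSup_le
    intro r
    by_cases hr : r ∈ stdSimplex ℝ (Fin k)
    · rw [ciSup_pos hr]
      rcases (hmem r).1 hr with ⟨hr0, hrsum⟩
      have hmax : ∀ j, ∃ m : Fin k, ∀ i, A i j ≤ A m j := fun j =>
        Finite.exists_max fun i => A i j
      choose m hm using hmax
      have hsupA : ∀ j, (⨆ i, A i j) = A (m j) j := fun j =>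
        le_antisymm (ciSup_le (hm j))
          (le_ciSup (f := fun i => A i j)
            (Set.Finite.bddAbove (Set.finite_range _)) (m j))
      set Q : Matrix (Fin k) (Fin k) ℝ := fun i j => if i = m j then r j else 0 with hQdef
      have hcol : ∀ j, ∑ i, Q i j = r j := by
        intro j
        simp [hQdef]
      have hQfeas : (∀ i j, 0 ≤ Q i j) ∧ ∑ i, ∑ j, Q i j = 1 := by
        constructor
        · intro i j
          by_cases h : i = m j <;> simp [hQdef, h, hr0 j]
        · rw [Finset.sum_comm]
          refine (Finset.sum_congr rfl fun j _ => hcol j).trans ?_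
          exact hrsum
      have hQA : ∑ i, ∑ j, Q i j * A i j = ∑ j, (⨆ i, A i j) * r j := by
        rw [Finset.sum_comm]
        refine sum_congr rfl fun j _ => ?_
        rw [hsupA j]
        simp [hQdef, ite_mul, mul_comm]
      have hinf_eq : (⨅ (p : Fin k → ℝ) (_ : p ∈ stdSimplex ℝ (Fin k)),
            ∑ a, ∑ b, p a * L a b * (∑ i, Q i b))
          = ⨅ (p : Fin k → ℝ) (_ : p ∈ stdSimplex ℝ (Fin k)),
            ∑ a, ∑ b, p a * L a b * r b := by
        simp only [hcol]
      have : (∑ j, (⨆ i, A i j) * r j)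
            + (⨅ (p : Fin k → ℝ) (_ : p ∈ stdSimplex ℝ (Fin k)),
                ∑ a, ∑ b, p a * L a b * r b)
          = (∑ i, ∑ j, Q i j * A i j)
            + (⨅ (p : Fin k → ℝ) (_ : p ∈ stdSimplex ℝ (Fin k)),
                ∑ a, ∑ b, p a * L a b * (∑ i, Q i b)) := by
        rw [hQA, hinf_eq]
      rw [this]
      exact le_bsup (by linarith) hFbound hQfeas
    · rw [bsup_neg hr]
      have h0 : ¬((∀ i j, (0:ℝ) ≤ (0 : Matrix (Fin k) (Fin k) ℝ) i j)
          ∧ ∑ i, ∑ j, (0 : Matrix (Fin k) (Fin k) ℝ) i j = 1) := by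
        intro h
        have := h.2
        simp at this
      exact zero_le_bsup (by linarith) hFbound h0
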